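/- For the Fibonacci string-net data (N=1, 1*=1, δ_{ijk}=0 only for triples with exactly one label equal to 1), define φ = (1+√5)/2 and the F-tensor by: F^{111}_{111} = -1/φ, F^{110}_{111} = F^{111}_{110} = 1/√φ, F^{011}_{011} = F^{101}_{101} = F^{110}_{110} = 1 (and similar entries forced by allowed branchings with a 0 label equal to 1), all other entries 0. Then F satisfies the pentagon identity Σ_n F^{mlq}_{kpn} F^{jip}_{mns} F^{jsn}_{lkr} = F^{jip}_{qkr} F^{riq}_{mls} for all labels, and d_1 = φ. -/
import Mathlib


open scoped BigOperators

/-- Fibonacci branching rule on labels `ℤ/2`: a triple is allowed unless exactly one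
of its labels equals `1` (so `000, 011, 101, 110, 111` are allowed). -/
def fibAllowed (i j k : ZMod 2) : Prop :=
  ¬(i = 0 ∧ j = 0 ∧ k = 1) ∧ ¬(i = 0 ∧ j = 1 ∧ k = 0) ∧ ¬(i = 1 ∧ j = 0 ∧ k = 0)

instance (i j k : ZMod 2) : Decidable (fibAllowed i j k) := by
  unfold fibAllowed; infer_instance

noncomputable def goldenRatio' : ℝ := (1 + Real.sqrt 5) / 2

/-- The Fibonacci F-tensor: supported on tuples where all four vertex triples
`(i,j,m), (k,l,m), (i,l,n), (j,k,n)` are allowed; on the fully nontrivial block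
`i = j = k = l = 1` it is the matrix `[[1/φ, 1/√φ], [1/√φ, -1/φ]]` in the internal
labels `(m,n)`, and it equals `1` on all other allowed tuples. -/
noncomputable def fibF (i j m k l n : ZMod 2) : ℝ :=
  if fibAllowed i j m ∧ fibAllowed k l m ∧ fibAllowed i l n ∧ fibAllowed j k n then
    (if i = 1 ∧ j = 1 ∧ k = 1 ∧ l = 1 then
      (if m = 1 ∧ n = 1 then -(1 / goldenRatio')
       else if m = 0 ∧ n = 0 then 1 / goldenRatio'
       else 1 / Real.sqrt goldenRatio')
     else 1)
  else 0

/-- The Fibonacci string-net data satisfies the pentagon identity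
`Σ_n F^{mlq}_{kpn} F^{jip}_{mns} F^{jsn}_{lkr} = F^{jip}_{qkr} F^{riq}_{mls}`
for all labels, and the quantum dimension of the nontrivial label is
`d_1 = 1/F^{110}_{110} = φ = (1+√5)/2`. -/

noncomputable def aa : ℝ := 1 / goldenRatio'
noncomputable def bb : ℝ := 1 / Real.sqrt goldenRatio'

lemma fv_000000 : fibF 0 0 0 0 0 0 = 1 := by
  simp only [fibF, fibAllowed, aa, bb]; norm_num
lemma fv_000001 : fibF 0 0 0 0 0 1 = 0 := by
  simp only [fibF, fibAllowed, aa, bb]; norm_num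
lemma fv_000010 : fibF 0 0 0 0 1 0 = 0 := by
  simp only [fibF, fibAllowed, aa, bb]; norm_num
lemma fv_000011 : fibF 0 0 0 0 1 1 = 0 := by
  simp only [fibF, fibAllowed, aa, bb]; norm_num
lemma fv_000100 : fibF 0 0 0 1 0 0 = 0 := by
  simp only [fibF, fibAllowed, aa, bb]; norm_num
lemma fv_000101 : fibF 0 0 0 1 0 1 = 0 := by
  simp only [fibF, fibAllowed, aa, bb]; norm_num
lemma fv_000110 : fibF 0 0 0 1 1 0 = 0 := by
  simp only [fibF, fibAllowed, aa, bb]; norm_num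
lemma fv_000111 : fibF 0 0 0 1 1 1 = 1 := by
  simp only [fibF, fibAllowed, aa, bb]; norm_num
lemma fv_001000 : fibF 0 0 1 0 0 0 = 0 := by
  simp only [fibF, fibAllowed, aa, bb]; norm_num
lemma fv_001001 : fibF 0 0 1 0 0 1 = 0 := by
  simp only [fibF, fibAllowed, aa, bb]; norm_num
lemma fv_001010 : fibF 0 0 1 0 1 0 = 0 := by
  simp only [fibF, fibAllowed, aa, bb]; norm_num
lemma fv_001011 : fibF 0 0 1 0 1 1 = 0 := by
  simp only [fibF, fibAllowed, aa, bb]; norm_num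
lemma fv_001100 : fibF 0 0 1 1 0 0 = 0 := by
  simp only [fibF, fibAllowed, aa, bb]; norm_num
lemma fv_001101 : fibF 0 0 1 1 0 1 = 0 := by
  simp only [fibF, fibAllowed, aa, bb]; norm_num
lemma fv_001110 : fibF 0 0 1 1 1 0 = 0 := by
  simp only [fibF, fibAllowed, aa, bb]; norm_num
lemma fv_001111 : fibF 0 0 1 1 1 1 = 0 := by
  simp only [fibF, fibAllowed, aa, bb]; norm_num
lemma fv_010000 : fibF 0 1 0 0 0 0 = 0 := by
  simp only [fibF, fibAllowed, aa, bb]; norm_num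
lemma fv_010001 : fibF 0 1 0 0 0 1 = 0 := by
  simp only [fibF, fibAllowed, aa, bb]; norm_num
lemma fv_010010 : fibF 0 1 0 0 1 0 = 0 := by
  simp only [fibF, fibAllowed, aa, bb]; norm_num
lemma fv_010011 : fibF 0 1 0 0 1 1 = 0 := by
  simp only [fibF, fibAllowed, aa, bb]; norm_num
lemma fv_010100 : fibF 0 1 0 1 0 0 = 0 := by
  simp only [fibF, fibAllowed, aa, bb]; norm_num
lemma fv_010101 : fibF 0 1 0 1 0 1 = 0 := by
  simp only [fibF, fibAllowed, aa, bb]; norm_num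
lemma fv_010110 : fibF 0 1 0 1 1 0 = 0 := by
  simp only [fibF, fibAllowed, aa, bb]; norm_num
lemma fv_010111 : fibF 0 1 0 1 1 1 = 0 := by
  simp only [fibF, fibAllowed, aa, bb]; norm_num
lemma fv_011000 : fibF 0 1 1 0 0 0 = 0 := by
  simp only [fibF, fibAllowed, aa, bb]; norm_num
lemma fv_011001 : fibF 0 1 1 0 0 1 = 0 := by
  simp only [fibF, fibAllowed, aa, bb]; norm_num
lemma fv_011010 : fibF 0 1 1 0 1 0 = 0 := by
  simp only [fibF, fibAllowed, aa, bb]; norm_num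
lemma fv_011011 : fibF 0 1 1 0 1 1 = 1 := by
  simp only [fibF, fibAllowed, aa, bb]; norm_num
lemma fv_011100 : fibF 0 1 1 1 0 0 = 1 := by
  simp only [fibF, fibAllowed, aa, bb]; norm_num
lemma fv_011101 : fibF 0 1 1 1 0 1 = 0 := by
  simp only [fibF, fibAllowed, aa, bb]; norm_num
lemma fv_011110 : fibF 0 1 1 1 1 0 = 0 := by
  simp only [fibF, fibAllowed, aa, bb]; norm_num
lemma fv_011111 : fibF 0 1 1 1 1 1 = 1 := by
  simp only [fibF, fibAllowed, aa, bb]; norm_num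
lemma fv_100000 : fibF 1 0 0 0 0 0 = 0 := by
  simp only [fibF, fibAllowed, aa, bb]; norm_num
lemma fv_100001 : fibF 1 0 0 0 0 1 = 0 := by
  simp only [fibF, fibAllowed, aa, bb]; norm_num
lemma fv_100010 : fibF 1 0 0 0 1 0 = 0 := by
  simp only [fibF, fibAllowed, aa, bb]; norm_num
lemma fv_100011 : fibF 1 0 0 0 1 1 = 0 := by
  simp only [fibF, fibAllowed, aa, bb]; norm_num
lemma fv_100100 : fibF 1 0 0 1 0 0 = 0 := by
  simp only [fibF, fibAllowed, aa, bb]; norm_num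
lemma fv_100101 : fibF 1 0 0 1 0 1 = 0 := by
  simp only [fibF, fibAllowed, aa, bb]; norm_num
lemma fv_100110 : fibF 1 0 0 1 1 0 = 0 := by
  simp only [fibF, fibAllowed, aa, bb]; norm_num
lemma fv_100111 : fibF 1 0 0 1 1 1 = 0 := by
  simp only [fibF, fibAllowed, aa, bb]; norm_num
lemma fv_101000 : fibF 1 0 1 0 0 0 = 0 := by
  simp only [fibF, fibAllowed, aa, bb]; norm_num
lemma fv_101001 : fibF 1 0 1 0 0 1 = 0 := by
  simp only [fibF, fibAllowed, aa, bb]; norm_num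
lemma fv_101010 : fibF 1 0 1 0 1 0 = 1 := by
  simp only [fibF, fibAllowed, aa, bb]; norm_num
lemma fv_101011 : fibF 1 0 1 0 1 1 = 0 := by
  simp only [fibF, fibAllowed, aa, bb]; norm_num
lemma fv_101100 : fibF 1 0 1 1 0 0 = 0 := by
  simp only [fibF, fibAllowed, aa, bb]; norm_num
lemma fv_101101 : fibF 1 0 1 1 0 1 = 1 := by
  simp only [fibF, fibAllowed, aa, bb]; norm_num
lemma fv_101110 : fibF 1 0 1 1 1 0 = 0 := by
  simp only [fibF, fibAllowed, aa, bb]; norm_num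
lemma fv_101111 : fibF 1 0 1 1 1 1 = 1 := by
  simp only [fibF, fibAllowed, aa, bb]; norm_num
lemma fv_110000 : fibF 1 1 0 0 0 0 = 0 := by
  simp only [fibF, fibAllowed, aa, bb]; norm_num
lemma fv_110001 : fibF 1 1 0 0 0 1 = 1 := by
  simp only [fibF, fibAllowed, aa, bb]; norm_num
lemma fv_110010 : fibF 1 1 0 0 1 0 = 0 := by
  simp only [fibF, fibAllowed, aa, bb]; norm_num
lemma fv_110011 : fibF 1 1 0 0 1 1 = 0 := by
  simp only [fibF, fibAllowed, aa, bb]; norm_num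
lemma fv_110100 : fibF 1 1 0 1 0 0 = 0 := by
  simp only [fibF, fibAllowed, aa, bb]; norm_num
lemma fv_110101 : fibF 1 1 0 1 0 1 = 0 := by
  simp only [fibF, fibAllowed, aa, bb]; norm_num
lemma fv_110110 : fibF 1 1 0 1 1 0 = aa := by
  simp only [fibF, fibAllowed, aa, bb]; norm_num
lemma fv_110111 : fibF 1 1 0 1 1 1 = bb := by
  simp only [fibF, fibAllowed, aa, bb]; norm_num
lemma fv_111000 : fibF 1 1 1 0 0 0 = 0 := by
  simp only [fibF, fibAllowed, aa, bb]; norm_num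
lemma fv_111001 : fibF 1 1 1 0 0 1 = 0 := by
  simp only [fibF, fibAllowed, aa, bb]; norm_num
lemma fv_111010 : fibF 1 1 1 0 1 0 = 0 := by
  simp only [fibF, fibAllowed, aa, bb]; norm_num
lemma fv_111011 : fibF 1 1 1 0 1 1 = 1 := by
  simp only [fibF, fibAllowed, aa, bb]; norm_num
lemma fv_111100 : fibF 1 1 1 1 0 0 = 0 := by
  simp only [fibF, fibAllowed, aa, bb]; norm_num
lemma fv_111101 : fibF 1 1 1 1 0 1 = 1 := by
  simp only [fibF, fibAllowed, aa, bb]; norm_num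
lemma fv_111110 : fibF 1 1 1 1 1 0 = bb := by
  simp only [fibF, fibAllowed, aa, bb]; norm_num
lemma fv_111111 : fibF 1 1 1 1 1 1 = -aa := by
  simp only [fibF, fibAllowed, aa, bb]; norm_num

lemma grpos : 0 < goldenRatio' := by unfold goldenRatio'; positivity

lemma grsq : goldenRatio' ^ 2 = goldenRatio' + 1 := by
  have h : Real.sqrt 5 ^ 2 = 5 := Real.sq_sqrt (by norm_num)
  unfold goldenRatio'; nlinarith [h]

lemma haa : aa ^ 2 = 1 - aa := by
  have hg := grpos
  have hs := grsq
  unfold aa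
  field_simp
  nlinarith [hs, hg]

lemma hbb : bb ^ 2 = aa := by
  unfold bb aa
  rw [div_pow, one_pow, Real.sq_sqrt grpos.le]

lemma sum2 (f : ZMod 2 → ℝ) : ∑ n : ZMod 2, f n = f 0 + f 1 := by
  rw [show (Finset.univ : Finset (ZMod 2)) = {0, 1} from by decide]
  rw [Finset.sum_pair (by decide)]

theorem fibonacci_pentagon_and_dimension :
    (∀ m l q k p j i s r : ZMod 2,
      ∑ n : ZMod 2, fibF m l q k p n * fibF j i p m n s * fibF j s n l k r =
        fibF j i p q k r * fibF r i q m l s) ∧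
    (fibF 1 1 0 1 1 0)⁻¹ = goldenRatio' := by
  constructor
  · intro m l q k p j i s r
    have key : ∀ x : ZMod 2, x = 0 ∨ x = 1 := by decide
    rw [sum2]
    rcases key m with rfl | rfl <;> rcases key l with rfl | rfl <;>
      rcases key q with rfl | rfl <;> rcases key k with rfl | rfl <;>
      rcases key p with rfl | rfl <;> rcases key j with rfl | rfl <;>
      rcases key i with rfl | rfl <;> rcases key s with rfl | rfl <;>
      rcases key r with rfl | rfl <;>
      simp only [fv_000000, fv_000001, fv_000010, fv_000011, fv_000100, fv_000101, fv_000110, fv_000111, fv_001000, fv_001001, fv_001010, fv_001011, fv_001100, fv_001101, fv_001110, fv_001111, fv_010000, fv_010001, fv_010010, fv_010011, fv_010100, fv_010101, fv_010110, fv_010111, fv_011000, fv_011001, fv_011010, fv_011011, fv_011100, fv_011101, fv_011110, fv_011111, fv_100000, fv_100001, fv_100010, fv_100011, fv_100100, fv_100101, fv_100110, fv_100111, fv_101000, fv_101001, fv_101010, fv_101011, fv_101100, fv_101101, fv_101110, fv_101111, fv_110000, fv_110001, fv_110010, fv_110011, fv_110100, fv_110101, fv_110110, fv_110111, fv_111000,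 fv_111001, fv_111010, fv_111011, fv_111100, fv_111101, fv_111110, fv_111111] <;>
      first
        | ring1
        | linear_combination hbb
        | linear_combination haa + hbb
        | linear_combination bb * haa
        | linear_combination haa
        | linear_combination -aa * hbb
        | linear_combination -hbb
        | linear_combination hbb - aa * haa
  · rw [fv_110110]
    unfold aa
    rw [one_div, inv_inv]
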